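/- arXiv:2006.13330 — 4 statements merged into one kernel-verified Lean document; each statement's English description precedes it below -/
import Mathlib

section
/- Let f : ℝⁿ → ℝ be differentiable. Then for every y and every α > 0, f(y) - (α/2) ∫₀¹ sup_{x} ‖∇f(y + s(x - y))‖₂² ds ≤ M_f^α(y) ≤ f(y), where the supremum is over x in the domain (assumed such that the supremum is finite). -/
open scoped BigOperators

/-- Moreau envelope bound for differentiable functions via the gradient along segments. -/
theorem moreau_envelope_gradient_bounds
    (n : ℕ) (f : EuclideanSpace ℝ (Fin n) → ℝ) (hf : Differentiable ℝ f)
    (y : EuclideanSpace ℝ (Fin n)) (α : ℝ) (hα : 0 < α)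
    (hbdd : ∀ s : ℝ, BddAbove (Set.range fun x : EuclideanSpace ℝ (Fin n) =>
      ‖fderiv ℝ f (y + s • (x - y))‖ ^ 2)) :
    f y - (α / 2) * ∫ s in (0:ℝ)..1,
        (⨆ x : EuclideanSpace ℝ (Fin n), ‖fderiv ℝ f (y + s • (x - y))‖ ^ 2) ≤
        (⨅ x : EuclideanSpace ℝ (Fin n), (‖x - y‖ ^ 2 / (2 * α) + f x)) ∧
      (⨅ x : EuclideanSpace ℝ (Fin n), (‖x - y‖ ^ 2 / (2 * α) + f x)) ≤ f y := by
  set C : ℝ := ⨆ z : EuclideanSpace ℝ (Fin n), ‖fderiv ℝ f z‖ ^ 2 with hCdef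
  have hbdd1 : BddAbove (Set.range fun z : EuclideanSpace ℝ (Fin n) => ‖fderiv ℝ f z‖ ^ 2) := by
    have := hbdd 1
    simpa using this
  have hC : ∀ z : EuclideanSpace ℝ (Fin n), ‖fderiv ℝ f z‖ ^ 2 ≤ C := fun z => le_ciSup hbdd1 z
  have hC0 : 0 ≤ C := le_trans (by positivity) (hC y)
  have hsup_eq : ∀ s : ℝ, s ≠ 0 →
      (⨆ x : EuclideanSpace ℝ (Fin n), ‖fderiv ℝ f (y + s • (x - y))‖ ^ 2) = C := by
    intro s hs
    have hsurj : Function.Surjective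
        (fun x : EuclideanSpace ℝ (Fin n) => y + s • (x - y)) := by
      intro z
      refine ⟨y + s⁻¹ • (z - y), ?_⟩
      simp [smul_smul, mul_inv_cancel₀ hs]
    have hr : Set.range ((fun z : EuclideanSpace ℝ (Fin n) => ‖fderiv ℝ f z‖ ^ 2) ∘
        (fun x : EuclideanSpace ℝ (Fin n) => y + s • (x - y))) =
        Set.range (fun z : EuclideanSpace ℝ (Fin n) => ‖fderiv ℝ f z‖ ^ 2) :=
      hsurj.range_comp _
    rw [hCdef, ← sSup_range, ← sSup_range]
    exact congrArg sSup hr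
  have hint_sup : (∫ s in (0:ℝ)..1,
      (⨆ x : EuclideanSpace ℝ (Fin n), ‖fderiv ℝ f (y + s • (x - y))‖ ^ 2)) = C := by
    have heq : (∫ s in (0:ℝ)..1,
        (⨆ x : EuclideanSpace ℝ (Fin n), ‖fderiv ℝ f (y + s • (x - y))‖ ^ 2)) =
        ∫ _ in (0:ℝ)..1, C := by
      apply intervalIntegral.integral_congr_ae
      filter_upwards with s hs
      have hs0 : s ≠ 0 := by
        rw [Set.uIoc_of_le (by norm_num : (0:ℝ) ≤ 1)] at hs
        exact ne_of_gt hs.1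
      exact hsup_eq s hs0
    rw [heq]
    simp
  have key : ∀ x : EuclideanSpace ℝ (Fin n),
      f y - α / 2 * C ≤ ‖x - y‖ ^ 2 / (2 * α) + f x := by
    intro x
    set γ : ℝ → EuclideanSpace ℝ (Fin n) := fun s => y + s • (x - y) with hγdef
    have hγ : ∀ s : ℝ, HasDerivAt γ (x - y) s := by
      intro s
      have h1 : HasDerivAt (fun s : ℝ => s • (x - y)) ((1:ℝ) • (x - y)) s :=
        (hasDerivAt_id s).smul_const (x - y)
      simpa only [one_smul] using h1.const_add y
    set g' : ℝ → ℝ := fun s => (fderiv ℝ f (γ s)) (x - y) with hg'def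
    have hder : ∀ s : ℝ, HasDerivAt (fun t => f (γ t)) (g' s) s := by
      intro s
      exact ((hf (γ s)).hasFDerivAt).comp_hasDerivAt s (hγ s)
    have hop : ∀ s : ℝ, ‖g' s‖ ≤ ‖fderiv ℝ f (γ s)‖ * ‖x - y‖ := fun s =>
      (fderiv ℝ f (γ s)).le_opNorm (x - y)
    have hbound : ∀ s : ℝ, ‖g' s‖ ≤ (C + 1) / 2 * ‖x - y‖ := by
      intro s
      have h2 : ‖fderiv ℝ f (γ s)‖ ≤ (C + 1) / 2 := by
        have := hC (γ s)
        nlinarith [sq_nonneg (‖fderiv ℝ f (γ s)‖ - 1)]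
      exact le_trans (hop s) (mul_le_mul_of_nonneg_right h2 (norm_nonneg _))
    have hmeas : Measurable g' := by
      have heq : (deriv fun t => f (γ t)) = g' := funext fun s => (hder s).deriv
      rw [← heq]
      exact measurable_deriv _
    have hint : IntervalIntegrable g' MeasureTheory.volume 0 1 := by
      rw [intervalIntegrable_iff]
      apply MeasureTheory.Integrable.mono'
        (MeasureTheory.integrableOn_const (C := (C + 1) / 2 * ‖x - y‖) (by
          rw [Set.uIoc_of_le (by norm_num : (0:ℝ) ≤ 1)]
          exact measure_Ioc_lt_top.ne))
        hmeas.aestronglyMeasurable.restrict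
      exact MeasureTheory.ae_of_all _ (fun s => hbound s)
    have hftc : (∫ s in (0:ℝ)..1, g' s) = f x - f y := by
      have h := intervalIntegral.integral_eq_sub_of_hasDerivAt
        (f := fun t => f (γ t)) (f' := g') (fun s _ => hder s) hint
      simpa [hγdef] using h
    have hmono : -(α / 2 * C + ‖x - y‖ ^ 2 / (2 * α)) ≤ ∫ s in (0:ℝ)..1, g' s := by
      have hconst : (∫ _ in (0:ℝ)..1, -(α / 2 * C + ‖x - y‖ ^ 2 / (2 * α))) =
          -(α / 2 * C + ‖x - y‖ ^ 2 / (2 * α)) := by simp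
      rw [← hconst]
      apply intervalIntegral.integral_mono_on (by norm_num) (intervalIntegrable_const) hint
      intro s _
      have h2α : (0:ℝ) < 2 * α := by linarith
      have hdiv : ‖x - y‖ ^ 2 / (2 * α) * (2 * α) = ‖x - y‖ ^ 2 :=
        div_mul_cancel₀ _ (ne_of_gt h2α)
      have h2 : ‖fderiv ℝ f (γ s)‖ * ‖x - y‖ ≤
          α / 2 * ‖fderiv ℝ f (γ s)‖ ^ 2 + ‖x - y‖ ^ 2 / (2 * α) := by
        nlinarith [sq_nonneg (α * ‖fderiv ℝ f (γ s)‖ - ‖x - y‖), hdiv, h2α]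
      have h3 : α / 2 * ‖fderiv ℝ f (γ s)‖ ^ 2 ≤ α / 2 * C :=
        mul_le_mul_of_nonneg_left (hC (γ s)) (by linarith)
      have h5 : ‖g' s‖ ≤ α / 2 * C + ‖x - y‖ ^ 2 / (2 * α) :=
        le_trans (hop s) (by linarith)
      have h6 := neg_abs_le (g' s)
      rw [Real.norm_eq_abs] at h5
      linarith
    rw [hftc] at hmono
    linarith
  constructor
  · rw [hint_sup]
    exact le_ciInf key
  · have hbbelow : BddBelow (Set.range fun x : EuclideanSpace ℝ (Fin n) =>
        ‖x - y‖ ^ 2 / (2 * α) + f x) := by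
      refine ⟨f y - α / 2 * C, ?_⟩
      rintro _ ⟨x, rfl⟩
      exact key x
    have h := ciInf_le hbbelow y
    simpa using h
end

section
/- Tensorization of the 2-Wasserstein distance: for probability measures μ = ⊗ᵢ μᵢ and ν = ⊗ᵢ νᵢ on ℝⁿ (products of one-dimensional marginals), equipped with the Euclidean metric, W₂²(μ, ν) = ∑_{i=1}^n W₂²(μᵢ, νᵢ). In particular, if all μᵢ = μ₀ and all νᵢ = ν₀, then W₂²(μ, ν) = n·W₂²(μ₀, ν₀). -/
open MeasureTheory

/-- The squared 2-Wasserstein distance with respect to a distance function `dst`,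
defined via couplings. -/
noncomputable def W2sq {α : Type*} [MeasurableSpace α] (dst : α → α → ℝ)
    (μ ν : Measure α) : ℝ :=
  sInf {c | ∃ π : Measure (α × α),
    π.map Prod.fst = μ ∧ π.map Prod.snd = ν ∧ c = ∫ p, dst p.1 p.2 ^ 2 ∂π}

lemma W2_coupling_prob {α β : Type*} [MeasurableSpace α] [MeasurableSpace β]
    {π : Measure (α × β)} {μ : Measure α} [IsProbabilityMeasure μ]
    (h : π.map Prod.fst = μ) : IsProbabilityMeasure π := by
  constructor
  have h1 : π.map Prod.fst Set.univ = 1 := by rw [h]; exact measure_univ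
  rwa [Measure.map_apply measurable_fst MeasurableSet.univ, Set.preimage_univ] at h1

lemma W2_cost1d_integrable {π : Measure (ℝ × ℝ)} {m₁ m₂ : Measure ℝ}
    (h1 : π.map Prod.fst = m₁) (h2 : π.map Prod.snd = m₂)
    (hm1 : Integrable (fun t : ℝ => t ^ 2) m₁) (hm2 : Integrable (fun t : ℝ => t ^ 2) m₂) :
    Integrable (fun p : ℝ × ℝ => (p.1 - p.2) ^ 2) π := by
  subst h1 h2
  have hf : Integrable (fun p : ℝ × ℝ => p.1 ^ 2) π :=
    (integrable_map_measure hm1.aestronglyMeasurable measurable_fst.aemeasurable).mp hm1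
  have hg : Integrable (fun p : ℝ × ℝ => p.2 ^ 2) π :=
    (integrable_map_measure hm2.aestronglyMeasurable measurable_snd.aemeasurable).mp hm2
  have hb : Integrable (fun p : ℝ × ℝ => 2 * p.1 ^ 2 + 2 * p.2 ^ 2) π :=
    (hf.const_mul 2).add (hg.const_mul 2)
  refine hb.mono' ((measurable_fst.sub measurable_snd).pow_const 2).aestronglyMeasurable ?_
  filter_upwards with p
  rw [Real.norm_eq_abs, abs_of_nonneg (sq_nonneg _)]
  nlinarith [sq_nonneg (p.1 + p.2)]

lemma W2_pi_map_eval {n : ℕ} {α : Fin n → Type*} [∀ i, MeasurableSpace (α i)]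
    (m : ∀ i, Measure (α i)) [∀ i, IsProbabilityMeasure (m i)] (i : Fin n) :
    (Measure.pi m).map (fun f => f i) = m i := by
  ext s hs
  rw [Measure.map_apply (measurable_pi_apply i) hs]
  have he : (fun f : ∀ j, α j => f i) ⁻¹' s
      = Set.pi Set.univ (Function.update (fun j => Set.univ) i s) := Set.eval_preimage
  rw [he, Measure.pi_pi]
  have hprod : ∀ j, m j (Function.update (fun _ => Set.univ) i s j)
      = Function.update (fun j => m j (Set.univ : Set (α j))) i (m i s) j :=
    fun j => Function.apply_update (fun j t => m j t) _ i s j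
  simp_rw [hprod]
  rw [Finset.prod_update_of_mem (Finset.mem_univ i)]
  simp [measure_univ]

lemma W2_set_nonneg {α : Type*} [MeasurableSpace α] (dst : α → α → ℝ) (μ ν : Measure α) :
    ∀ c ∈ {c | ∃ π : Measure (α × α),
      π.map Prod.fst = μ ∧ π.map Prod.snd = ν ∧ c = ∫ p, dst p.1 p.2 ^ 2 ∂π}, 0 ≤ c := by
  rintro c ⟨π, -, -, rfl⟩
  exact integral_nonneg fun p => sq_nonneg _

lemma W2_set_nonempty {α : Type*} [MeasurableSpace α] (dst : α → α → ℝ) (μ ν : Measure α)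
    [IsProbabilityMeasure μ] [IsProbabilityMeasure ν] :
    Set.Nonempty {c | ∃ π : Measure (α × α),
      π.map Prod.fst = μ ∧ π.map Prod.snd = ν ∧ c = ∫ p, dst p.1 p.2 ^ 2 ∂π} :=
  ⟨_, μ.prod ν, by simp [Measure.map_fst_prod], by simp [Measure.map_snd_prod], rfl⟩


lemma W2_prod_mem {n : ℕ} (μi νi : Fin n → Measure ℝ)
    [∀ i, IsProbabilityMeasure (μi i)] [∀ i, IsProbabilityMeasure (νi i)]
    (hμ : ∀ i, Integrable (fun t : ℝ => t ^ 2) (μi i))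
    (hν : ∀ i, Integrable (fun t : ℝ => t ^ 2) (νi i))
    (πs : Fin n → Measure (ℝ × ℝ))
    (h1 : ∀ i, (πs i).map Prod.fst = μi i) (h2 : ∀ i, (πs i).map Prod.snd = νi i) :
    (∑ i, ∫ q : ℝ × ℝ, |q.1 - q.2| ^ 2 ∂(πs i)) ∈
      {c | ∃ π : Measure ((Fin n → ℝ) × (Fin n → ℝ)),
        π.map Prod.fst = Measure.pi μi ∧ π.map Prod.snd = Measure.pi νi ∧
        c = ∫ p, Real.sqrt (∑ i, (p.1 i - p.2 i) ^ 2) ^ 2 ∂π} := by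
  haveI : ∀ i, IsProbabilityMeasure (πs i) := fun i => W2_coupling_prob (h1 i)
  set Φ : (Fin n → ℝ × ℝ) → (Fin n → ℝ) × (Fin n → ℝ) :=
    fun f => (fun i => (f i).1, fun i => (f i).2) with hΦdef
  have hΦ : Measurable Φ :=
    (measurable_pi_lambda _ fun i => measurable_fst.comp (measurable_pi_apply i)).prodMk
      (measurable_pi_lambda _ fun i => measurable_snd.comp (measurable_pi_apply i))
  refine ⟨(Measure.pi πs).map Φ, ?_, ?_, ?_⟩
  · rw [Measure.map_map measurable_fst hΦ]
    exact (measurePreserving_pi πs μi fun i => ⟨measurable_fst, h1 i⟩).map_eq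
  · rw [Measure.map_map measurable_snd hΦ]
    exact (measurePreserving_pi πs νi fun i => ⟨measurable_snd, h2 i⟩).map_eq
  · have hmeas : Measurable fun p : (Fin n → ℝ) × (Fin n → ℝ) => ∑ i, (p.1 i - p.2 i) ^ 2 :=
      Finset.measurable_sum _ fun i _ =>
        (((measurable_pi_apply i).comp measurable_fst).sub
          ((measurable_pi_apply i).comp measurable_snd)).pow_const 2
    have heval : ∀ i, (Measure.pi πs).map (fun f => f i) = πs i := W2_pi_map_eval πs
    have hint : ∀ i, Integrable (fun q : ℝ × ℝ => (q.1 - q.2) ^ 2) (πs i) :=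
      fun i => W2_cost1d_integrable (h1 i) (h2 i) (hμ i) (hν i)
    have hIi : ∀ i, Integrable (fun f : Fin n → ℝ × ℝ => ((f i).1 - (f i).2) ^ 2)
        (Measure.pi πs) := by
      intro i
      have h := hint i
      rw [← heval i] at h
      exact (integrable_map_measure h.aestronglyMeasurable
        (measurable_pi_apply i).aemeasurable).mp h
    calc ∑ i, ∫ q : ℝ × ℝ, |q.1 - q.2| ^ 2 ∂(πs i)
        = ∑ i, ∫ q : ℝ × ℝ, (q.1 - q.2) ^ 2 ∂(πs i) := by simp_rw [sq_abs]
      _ = ∑ i, ∫ f : Fin n → ℝ × ℝ, ((f i).1 - (f i).2) ^ 2 ∂(Measure.pi πs) := by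
          refine Finset.sum_congr rfl fun i _ => ?_
          rw [← heval i, integral_map (measurable_pi_apply i).aemeasurable
            ((measurable_fst.sub measurable_snd).pow_const 2).aestronglyMeasurable]
      _ = ∫ f : Fin n → ℝ × ℝ, ∑ i, ((f i).1 - (f i).2) ^ 2 ∂(Measure.pi πs) :=
          (integral_finset_sum _ fun i _ => hIi i).symm
      _ = ∫ p, ∑ i, (p.1 i - p.2 i) ^ 2 ∂((Measure.pi πs).map Φ) := by
          rw [integral_map hΦ.aemeasurable hmeas.aestronglyMeasurable]
      _ = ∫ p, Real.sqrt (∑ i, (p.1 i - p.2 i) ^ 2) ^ 2 ∂((Measure.pi πs).map Φ) :=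
          integral_congr_ae (Filter.Eventually.of_forall fun p =>
            (Real.sq_sqrt (Finset.sum_nonneg fun i _ => sq_nonneg _)).symm)

lemma W2_lower {n : ℕ} (μi νi : Fin n → Measure ℝ)
    [∀ i, IsProbabilityMeasure (μi i)] [∀ i, IsProbabilityMeasure (νi i)]
    (hμ : ∀ i, Integrable (fun t : ℝ => t ^ 2) (μi i))
    (hν : ∀ i, Integrable (fun t : ℝ => t ^ 2) (νi i)) :
    ∀ c ∈ {c | ∃ π : Measure ((Fin n → ℝ) × (Fin n → ℝ)),
        π.map Prod.fst = Measure.pi μi ∧ π.map Prod.snd = Measure.pi νi ∧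
        c = ∫ p, Real.sqrt (∑ i, (p.1 i - p.2 i) ^ 2) ^ 2 ∂π},
      ∑ i, W2sq (fun a b : ℝ => |a - b|) (μi i) (νi i) ≤ c := by
  rintro c ⟨π, hπ1, hπ2, rfl⟩
  haveI : IsProbabilityMeasure π := W2_coupling_prob hπ1
  have hφ : ∀ i : Fin n, Measurable fun p : (Fin n → ℝ) × (Fin n → ℝ) => (p.1 i, p.2 i) :=
    fun i => ((measurable_pi_apply i).comp measurable_fst).prodMk
      ((measurable_pi_apply i).comp measurable_snd)
  set πI : Fin n → Measure (ℝ × ℝ) :=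
    fun i => π.map (fun p => (p.1 i, p.2 i)) with hπIdef
  have marg1 : ∀ i, (πI i).map Prod.fst = μi i := by
    intro i
    rw [hπIdef, Measure.map_map measurable_fst (hφ i)]
    have he : (Prod.fst ∘ fun p : (Fin n → ℝ) × (Fin n → ℝ) => (p.1 i, p.2 i))
        = (fun f : Fin n → ℝ => f i) ∘ Prod.fst := rfl
    rw [he, ← Measure.map_map (measurable_pi_apply i) measurable_fst, hπ1, W2_pi_map_eval]
  have marg2 : ∀ i, (πI i).map Prod.snd = νi i := by
    intro i
    rw [hπIdef, Measure.map_map measurable_snd (hφ i)]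
    have he : (Prod.snd ∘ fun p : (Fin n → ℝ) × (Fin n → ℝ) => (p.1 i, p.2 i))
        = (fun f : Fin n → ℝ => f i) ∘ Prod.snd := rfl
    rw [he, ← Measure.map_map (measurable_pi_apply i) measurable_snd, hπ2, W2_pi_map_eval]
  have hint : ∀ i, Integrable (fun q : ℝ × ℝ => (q.1 - q.2) ^ 2) (πI i) :=
    fun i => W2_cost1d_integrable (marg1 i) (marg2 i) (hμ i) (hν i)
  have hIi : ∀ i, Integrable
      (fun p : (Fin n → ℝ) × (Fin n → ℝ) => (p.1 i - p.2 i) ^ 2) π := by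
    intro i
    exact (integrable_map_measure (hint i).aestronglyMeasurable (hφ i).aemeasurable).mp (hint i)
  calc ∑ i, W2sq (fun a b : ℝ => |a - b|) (μi i) (νi i)
      ≤ ∑ i, ∫ q : ℝ × ℝ, (q.1 - q.2) ^ 2 ∂(πI i) := by
        refine Finset.sum_le_sum fun i _ => ?_
        refine csInf_le ⟨0, fun c hc => W2_set_nonneg (fun a b : ℝ => |a - b|) (μi i) (νi i) c hc⟩ ?_
        exact ⟨πI i, marg1 i, marg2 i, by simp_rw [sq_abs]⟩
    _ = ∑ i, ∫ p : (Fin n → ℝ) × (Fin n → ℝ), (p.1 i - p.2 i) ^ 2 ∂π := by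
        refine Finset.sum_congr rfl fun i _ => ?_
        rw [hπIdef, integral_map (f := fun q : ℝ × ℝ => (q.1 - q.2) ^ 2) (hφ i).aemeasurable
          ((measurable_fst.sub measurable_snd).pow_const 2).aestronglyMeasurable]
    _ = ∫ p, ∑ i, (p.1 i - p.2 i) ^ 2 ∂π := (integral_finset_sum _ fun i _ => hIi i).symm
    _ ≤ ∫ p, Real.sqrt (∑ i, (p.1 i - p.2 i) ^ 2) ^ 2 ∂π := le_of_eq <|
        integral_congr_ae (Filter.Eventually.of_forall fun p =>
          (Real.sq_sqrt (Finset.sum_nonneg fun i _ => sq_nonneg _)).symm)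

/-- Tensorization of the squared 2-Wasserstein distance for product measures on `ℝⁿ`
with the Euclidean metric; in particular, for identical marginals it equals `n` times
the one-dimensional squared distance. -/
theorem wasserstein2_tensorization
    (n : ℕ) (μi νi : Fin n → Measure ℝ)
    [∀ i, IsProbabilityMeasure (μi i)] [∀ i, IsProbabilityMeasure (νi i)]
    (hμ : ∀ i, Integrable (fun t : ℝ => t ^ 2) (μi i))
    (hν : ∀ i, Integrable (fun t : ℝ => t ^ 2) (νi i)) :
    W2sq (fun x y : Fin n → ℝ => Real.sqrt (∑ i, (x i - y i) ^ 2))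
        (Measure.pi μi) (Measure.pi νi)
      = ∑ i, W2sq (fun a b : ℝ => |a - b|) (μi i) (νi i) ∧
    ∀ i₀ : Fin n, (∀ i, μi i = μi i₀) → (∀ i, νi i = νi i₀) →
      W2sq (fun x y : Fin n → ℝ => Real.sqrt (∑ i, (x i - y i) ^ 2))
          (Measure.pi μi) (Measure.pi νi)
        = n * W2sq (fun a b : ℝ => |a - b|) (μi i₀) (νi i₀) := by
  have key : W2sq (fun x y : Fin n → ℝ => Real.sqrt (∑ i, (x i - y i) ^ 2))
      (Measure.pi μi) (Measure.pi νi)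
      = ∑ i, W2sq (fun a b : ℝ => |a - b|) (μi i) (νi i) := by
    apply le_antisymm
    · refine le_of_forall_pos_le_add fun ε hε => ?_
      have hchoice : ∀ i : Fin n, ∃ π : Measure (ℝ × ℝ),
          π.map Prod.fst = μi i ∧ π.map Prod.snd = νi i ∧
          (∫ q : ℝ × ℝ, |q.1 - q.2| ^ 2 ∂π)
            < W2sq (fun a b : ℝ => |a - b|) (μi i) (νi i) + ε / n := by
        intro i
        have hn : (0 : ℝ) < ε / n := div_pos hε (by exact_mod_cast i.pos)
        obtain ⟨c, hc, hlt⟩ := exists_lt_of_csInf_lt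
          (W2_set_nonempty (fun a b : ℝ => |a - b|) (μi i) (νi i))
          (lt_add_of_pos_right _ hn)
        obtain ⟨π, h1, h2, rfl⟩ := hc
        exact ⟨π, h1, h2, hlt⟩
      choose πs h1 h2 hlt using hchoice
      have hmem := W2_prod_mem μi νi hμ hν πs h1 h2
      refine le_trans (csInf_le ⟨0, fun c hc =>
        W2_set_nonneg (fun x y : Fin n → ℝ => Real.sqrt (∑ i, (x i - y i) ^ 2))
          (Measure.pi μi) (Measure.pi νi) c hc⟩ hmem) ?_
      refine le_trans (Finset.sum_le_sum fun i _ => (hlt i).le) ?_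
      rw [Finset.sum_add_distrib, Finset.sum_const, Finset.card_univ, Fintype.card_fin,
        nsmul_eq_mul]
      have hle : (n : ℝ) * (ε / n) ≤ ε := by
        rcases Nat.eq_zero_or_pos n with h | h
        · simp [h, hε.le]
        · rw [mul_div_cancel₀ _ (by exact_mod_cast h.ne' : (n : ℝ) ≠ 0)]
      linarith
    · exact le_csInf (W2_set_nonempty (fun x y : Fin n → ℝ => Real.sqrt (∑ i, (x i - y i) ^ 2)) (Measure.pi μi) (Measure.pi νi)) (W2_lower μi νi hμ hν)
  refine ⟨key, fun i₀ hμ' hν' => ?_⟩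
  rw [key]
  calc ∑ i, W2sq (fun a b : ℝ => |a - b|) (μi i) (νi i)
      = ∑ _i : Fin n, W2sq (fun a b : ℝ => |a - b|) (μi i₀) (νi i₀) :=
        Finset.sum_congr rfl fun i _ => by rw [hμ' i, hν' i]
    _ = n * W2sq (fun a b : ℝ => |a - b|) (μi i₀) (νi i₀) := by
        rw [Finset.sum_const, Finset.card_univ, Fintype.card_fin, nsmul_eq_mul]
end

section
/- Villani's total-variation bound for Wasserstein distance on bounded spaces: for probability measures μ, ν on a Polish space (X, d) with finite diameter D, W_p^p(μ, ν) ≤ D^p · 2^{p/q} · ‖μ - ν‖_TV, where 1/p + 1/q = 1. -/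
open MeasureTheory

/-- The `p`-Wasserstein distance with respect to a distance function `dst`,
defined via couplings. -/
noncomputable def wassersteinP {α : Type*} [MeasurableSpace α] (p : ℝ) (dst : α → α → ℝ)
    (μ ν : Measure α) : ℝ :=
  sInf {c | ∃ π : Measure (α × α),
    π.map Prod.fst = μ ∧ π.map Prod.snd = ν ∧
      c = (∫ pr, dst pr.1 pr.2 ^ p ∂π) ^ (1 / p)}

/-- The total variation distance between two measures. -/
noncomputable def tvDist {α : Type*} [MeasurableSpace α] (μ ν : Measure α) : ℝ :=
  sSup {c | ∃ s : Set α, MeasurableSet s ∧ c = |(μ s).toReal - (ν s).toReal|}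

/-- Villani's total-variation bound for the Wasserstein distance on bounded spaces:
`W_p^p(μ,ν) ≤ D^p · 2^{p/q} · ‖μ - ν‖_TV` with `1/p + 1/q = 1`. -/
theorem wasserstein_le_tv
    (X : Type*) [MetricSpace X] [PolishSpace X] [MeasurableSpace X] [BorelSpace X]
    (p q D : ℝ) (hp : 1 ≤ p) (hpq : 1 / p + 1 / q = 1)
    (hD : ∀ x y : X, dist x y ≤ D)
    (μ ν : Measure X) [IsProbabilityMeasure μ] [IsProbabilityMeasure ν] :
    wassersteinP p dist μ ν ^ p ≤ D ^ p * 2 ^ (p / q) * tvDist μ ν := by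
  -- basic facts
  have hp0 : (0:ℝ) < p := lt_of_lt_of_le one_pos hp
  have hpne : p ≠ 0 := ne_of_gt hp0
  have hXne : Nonempty X := by
    by_contra h
    rw [not_nonempty_iff] at h
    have h1 : μ Set.univ = 1 := measure_univ
    rw [Set.univ_eq_empty_iff.mpr h, measure_empty] at h1
    exact zero_ne_one h1
  obtain ⟨x0⟩ := hXne
  have hD0 : 0 ≤ D := le_trans dist_nonneg (hD x0 x0)
  have hDp0 : 0 ≤ D ^ p := Real.rpow_nonneg hD0 p
  -- Hahn decomposition
  obtain ⟨s, hs, hsle, hsc⟩ := hahn_decomposition (μ := μ) (ν := ν)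
  have hres : ν.restrict s ≤ μ.restrict s := by
    refine Measure.le_iff.mpr fun t ht => ?_
    rw [Measure.restrict_apply ht, Measure.restrict_apply ht]
    exact hsle _ (ht.inter hs) Set.inter_subset_right
  have hresc : μ.restrict sᶜ ≤ ν.restrict sᶜ := by
    refine Measure.le_iff.mpr fun t ht => ?_
    rw [Measure.restrict_apply ht, Measure.restrict_apply ht]
    exact hsc _ (ht.inter hs.compl) Set.inter_subset_right
  set α : Measure X := μ.restrict s - ν.restrict s with hα
  set β : Measure X := ν.restrict sᶜ - μ.restrict sᶜ with hβ
  set η : Measure X := ν.restrict s + μ.restrict sᶜ with hη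
  haveI : IsFiniteMeasure α := isFiniteMeasure_of_le μ (le_trans Measure.sub_le Measure.restrict_le_self)
  haveI : IsFiniteMeasure β := isFiniteMeasure_of_le ν (le_trans Measure.sub_le Measure.restrict_le_self)
  haveI : IsFiniteMeasure η := by
    constructor
    rw [hη, Measure.add_apply]
    exact ENNReal.add_lt_top.mpr ⟨measure_lt_top _ _, measure_lt_top _ _⟩
  have hμdec : η + α = μ := by
    rw [hη, hα, add_assoc, add_comm (μ.restrict sᶜ), ← add_assoc, add_comm (ν.restrict s),
      Measure.sub_add_cancel_of_le hres, Measure.restrict_add_restrict_compl hs]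
  have hνdec : η + β = ν := by
    rw [hη, hβ, add_assoc, add_comm (μ.restrict sᶜ), Measure.sub_add_cancel_of_le hresc,
      Measure.restrict_add_restrict_compl hs]
  -- total masses
  set t0 : ENNReal := α Set.univ with ht0
  have ht0top : t0 ≠ ⊤ := measure_ne_top _ _
  have hβuniv : β Set.univ = t0 := by
    have h1 : η Set.univ + α Set.univ = 1 := by
      rw [← Measure.add_apply, hμdec, measure_univ]
    have h2 : η Set.univ + β Set.univ = 1 := by
      rw [← Measure.add_apply, hνdec, measure_univ]
    exact (ENNReal.add_right_inj (measure_ne_top η _)).mp (h2.trans h1.symm)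
  -- the coupling
  have hdiag : Measurable fun x : X => (x, x) := measurable_id.prodMk measurable_id
  set π2 : Measure (X × X) := t0⁻¹ • (α.prod β) with hπ2
  set π : Measure (X × X) := η.map (fun x => (x, x)) + π2 with hπdef
  have hπ2univ : π2 Set.univ = t0 := by
    rw [hπ2, Measure.smul_apply, smul_eq_mul, ← Set.univ_prod_univ, Measure.prod_prod,
      hβuniv, ← ht0]
    rcases eq_or_ne t0 0 with h | h
    · simp [h]
    · rw [← mul_assoc, ENNReal.inv_mul_cancel h ht0top, one_mul]
  haveI : IsFiniteMeasure π2 := ⟨by rw [hπ2univ]; exact ht0top.lt_top⟩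
  haveI : IsFiniteMeasure (η.map (fun x => (x, x))) := Measure.isFiniteMeasure_map _ _
  haveI : IsFiniteMeasure π := by
    constructor
    rw [hπdef, Measure.add_apply]
    exact ENNReal.add_lt_top.mpr ⟨measure_lt_top _ _, measure_lt_top _ _⟩
  -- marginals
  have hfst : π.map Prod.fst = μ := by
    rw [hπdef, Measure.map_add _ _ measurable_fst, Measure.map_map measurable_fst hdiag]
    have h2 : π2.map Prod.fst = α := by
      rcases eq_or_ne t0 0 with h | h
      · have : α = 0 := by rwa [← Measure.measure_univ_eq_zero, ← ht0]
        rw [hπ2, this]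
        simp
      · rw [hπ2, Measure.map_smul, Measure.map_fst_prod, hβuniv, smul_smul,
          ENNReal.inv_mul_cancel h ht0top, one_smul]
    rw [h2]
    have : (Prod.fst ∘ fun x : X => (x, x)) = id := rfl
    rw [this, Measure.map_id, hμdec]
  have hsnd : π.map Prod.snd = ν := by
    rw [hπdef, Measure.map_add _ _ measurable_snd, Measure.map_map measurable_snd hdiag]
    have h2 : π2.map Prod.snd = β := by
      rcases eq_or_ne t0 0 with h | h
      · have hβ0 : β = 0 := by rw [← Measure.measure_univ_eq_zero, hβuniv]; exact h
        have hα0 : α = 0 := by rwa [← Measure.measure_univ_eq_zero, ← ht0]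
        rw [hπ2, hα0, hβ0]
        simp
      · rw [hπ2, Measure.map_smul, Measure.map_snd_prod, ← ht0, smul_smul,
          ENNReal.inv_mul_cancel h ht0top, one_smul]
    rw [h2]
    have : (Prod.snd ∘ fun x : X => (x, x)) = id := rfl
    rw [this, Measure.map_id, hνdec]
  -- the integrand
  set f : X × X → ℝ := fun pr => dist pr.1 pr.2 ^ p with hf
  have hfc : Continuous f := by
    apply Continuous.rpow_const continuous_dist
    intro x; right; exact le_of_lt hp0
  have hfnn : ∀ pr, 0 ≤ f pr := fun pr => Real.rpow_nonneg dist_nonneg p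
  have hfbd : ∀ pr, f pr ≤ D ^ p := fun pr =>
    Real.rpow_le_rpow dist_nonneg (hD _ _) (le_of_lt hp0)
  have hint : ∀ (m : Measure (X × X)) [IsFiniteMeasure m], Integrable f m := by
    intro m _
    refine (integrable_const (D ^ p)).mono' hfc.aestronglyMeasurable ?_
    filter_upwards with pr
    rw [Real.norm_eq_abs, abs_of_nonneg (hfnn pr)]
    exact hfbd pr
  -- integral bound
  set ε : ℝ := t0.toReal with hε
  have hI1 : ∫ pr, f pr ∂(η.map (fun x => (x, x))) = 0 := by
    rw [integral_map hdiag.aemeasurable hfc.aestronglyMeasurable]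
    have : ∀ x : X, f (x, x) = 0 := by
      intro x
      show dist x x ^ p = 0
      rw [dist_self, Real.zero_rpow hpne]
    simp [this]
  have hI2 : ∫ pr, f pr ∂π2 ≤ D ^ p * ε := by
    calc ∫ pr, f pr ∂π2 ≤ ∫ _, D ^ p ∂π2 :=
          integral_mono (hint π2) (integrable_const _) hfbd
      _ = (π2 Set.univ).toReal • (D ^ p) := integral_const _
      _ = D ^ p * ε := by rw [hπ2univ, smul_eq_mul, mul_comm, hε]
  have hI : ∫ pr, f pr ∂π ≤ D ^ p * ε := by
    rw [hπdef, integral_add_measure (hint _) (hint _), hI1, zero_add]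
    exact hI2
  have hInn : 0 ≤ ∫ pr, f pr ∂π := integral_nonneg hfnn
  -- ε ≤ tvDist
  have htv_bdd : BddAbove {c | ∃ u : Set X, MeasurableSet u ∧ c = |(μ u).toReal - (ν u).toReal|} := by
    refine ⟨1, ?_⟩
    rintro x ⟨u, hu, rfl⟩
    rw [abs_le]
    constructor
    · have h1 : (μ u).toReal ≥ 0 := ENNReal.toReal_nonneg
      have h2 : (ν u).toReal ≤ 1 := by
        rw [← ENNReal.toReal_one]
        exact ENNReal.toReal_mono ENNReal.one_ne_top prob_le_one
      linarith
    · have h1 : (ν u).toReal ≥ 0 := ENNReal.toReal_nonneg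
      have h2 : (μ u).toReal ≤ 1 := by
        rw [← ENNReal.toReal_one]
        exact ENNReal.toReal_mono ENNReal.one_ne_top prob_le_one
      linarith
  have hεtv : ε ≤ tvDist μ ν := by
    have hεval : ε = |(μ s).toReal - (ν s).toReal| := by
      rw [hε, ht0, hα, Measure.sub_apply MeasurableSet.univ hres,
        Measure.restrict_apply_univ, Measure.restrict_apply_univ,
        ENNReal.toReal_sub_of_le (hsle s hs subset_rfl) (measure_ne_top _ _),
        abs_of_nonneg]
      have := ENNReal.toReal_mono (measure_ne_top μ s) (hsle s hs subset_rfl)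
      linarith
    rw [tvDist]
    exact le_csSup htv_bdd ⟨s, hs, hεval⟩
  have hεnn : 0 ≤ ε := ENNReal.toReal_nonneg
  have htvnn : 0 ≤ tvDist μ ν := le_trans hεnn hεtv
  -- conclude
  set S := {c | ∃ π : Measure (X × X),
    π.map Prod.fst = μ ∧ π.map Prod.snd = ν ∧
      c = (∫ pr, dist pr.1 pr.2 ^ p ∂π) ^ (1 / p)} with hS
  have hmem : (∫ pr, f pr ∂π) ^ (1 / p) ∈ S := ⟨π, hfst, hsnd, rfl⟩
  have hSnn : ∀ c ∈ S, (0:ℝ) ≤ c := by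
    rintro c ⟨π', h1, h2, rfl⟩
    exact Real.rpow_nonneg (integral_nonneg fun pr => Real.rpow_nonneg dist_nonneg p) _
  have hWle : wassersteinP p dist μ ν ≤ (∫ pr, f pr ∂π) ^ (1 / p) :=
    csInf_le ⟨0, hSnn⟩ hmem
  have hWnn : 0 ≤ wassersteinP p dist μ ν := Real.sInf_nonneg hSnn
  have step1 : wassersteinP p dist μ ν ^ p ≤ ((∫ pr, f pr ∂π) ^ (1 / p)) ^ p :=
    Real.rpow_le_rpow hWnn hWle (le_of_lt hp0)
  have step2 : ((∫ pr, f pr ∂π) ^ (1 / p)) ^ p = ∫ pr, f pr ∂π := by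
    rw [← Real.rpow_mul hInn, one_div_mul_cancel hpne, Real.rpow_one]
  have hq0 : 0 ≤ q := by
    have h1 : 1 / p ≤ 1 := by
      rw [div_le_one hp0]; exact hp
    have h2 : 0 ≤ 1 / q := by linarith
    exact (one_div_nonneg.mp h2)
  have h21 : (1:ℝ) ≤ 2 ^ (p / q) :=
    Real.one_le_rpow one_le_two (div_nonneg (le_of_lt hp0) hq0)
  calc wassersteinP p dist μ ν ^ p ≤ ∫ pr, f pr ∂π := step1.trans_eq step2
    _ ≤ D ^ p * ε := hI
    _ ≤ D ^ p * tvDist μ ν := mul_le_mul_of_nonneg_left hεtv hDp0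
    _ ≤ D ^ p * 2 ^ (p / q) * tvDist μ ν := by
        have := mul_le_mul_of_nonneg_right (mul_le_mul_of_nonneg_left h21 hDp0) htvnn
        simpa using this
end

section
/- Consider the dual objective g(λ) = λR² - (1/N)∑_{k=1}^N inf_{ζ ∈ Ξ}(λ(ξ_k - ζ)² - φ(ζ)), where sup_{ζ∈Ξ}|φ(ζ)| ≤ 1, the points ξ_k ∈ Ξ, and R > 0. Then any minimizer λ* of g over [0,∞) satisfies λ* ≤ 2/R². -/
open scoped BigOperators

/-- Any minimizer over `[0,∞)` of the dual objective
`g(λ) = λR² - (1/N)∑ₖ inf_{ζ∈Ξ} (λ(ξₖ-ζ)² - φ(ζ))` satisfies `λ* ≤ 2/R²`. -/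
theorem dual_multiplier_bound
    (Ξ : Set ℝ) (hΞ : Ξ.Nonempty) (φ : ℝ → ℝ) (hφ : ∀ ζ ∈ Ξ, |φ ζ| ≤ 1)
    (N : ℕ) (hN : 0 < N) (ξ : Fin N → ℝ) (hξ : ∀ k, ξ k ∈ Ξ)
    (R : ℝ) (hR : 0 < R)
    (g : ℝ → ℝ)
    (hg : ∀ lam, g lam = lam * R ^ 2 -
      (1 / (N : ℝ)) * ∑ k, ⨅ ζ : Ξ, (lam * (ξ k - (ζ : ℝ)) ^ 2 - φ ζ))
    (lamstar : ℝ) (h0 : 0 ≤ lamstar) (hmin : ∀ lam, 0 ≤ lam → g lamstar ≤ g lam) :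
    lamstar ≤ 2 / R ^ 2 := by
  have hne : Nonempty Ξ := hΞ.to_subtype
  have hNpos : (0:ℝ) < N := by exact_mod_cast hN
  have hbdd : ∀ (lam : ℝ), 0 ≤ lam → ∀ k : Fin N,
      BddBelow (Set.range fun ζ : Ξ => lam * (ξ k - (ζ:ℝ)) ^ 2 - φ ζ) := by
    intro lam hl k
    refine ⟨-1, ?_⟩
    rintro x ⟨ζ, rfl⟩
    have h1 := abs_le.1 (hφ ζ ζ.2)
    show (-1:ℝ) ≤ lam * (ξ k - (ζ:ℝ)) ^ 2 - φ ζ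
    nlinarith [sq_nonneg (ξ k - (ζ:ℝ))]
  -- each infimum at lamstar is ≤ 1
  have hinf_le : ∀ k : Fin N,
      (⨅ ζ : Ξ, (lamstar * (ξ k - (ζ:ℝ)) ^ 2 - φ ζ)) ≤ 1 := by
    intro k
    have h2 := ciInf_le (hbdd lamstar h0 k) (⟨ξ k, hξ k⟩ : Ξ)
    have h1 := abs_le.1 (hφ (ξ k) (hξ k))
    simp only at h2
    nlinarith
  -- each infimum at 0 is ≥ -1
  have hinf_ge : ∀ k : Fin N,
      (-1 : ℝ) ≤ ⨅ ζ : Ξ, ((0:ℝ) * (ξ k - (ζ:ℝ)) ^ 2 - φ ζ) := by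
    intro k
    apply le_ciInf
    intro ζ
    have h1 := abs_le.1 (hφ ζ ζ.2)
    nlinarith
  have hsum_le : ∑ k, (⨅ ζ : Ξ, (lamstar * (ξ k - (ζ:ℝ)) ^ 2 - φ ζ)) ≤ (N:ℝ) := by
    calc ∑ k, (⨅ ζ : Ξ, (lamstar * (ξ k - (ζ:ℝ)) ^ 2 - φ ζ))
        ≤ ∑ _k : Fin N, (1:ℝ) := Finset.sum_le_sum fun k _ => hinf_le k
      _ = (N:ℝ) := by simp
  have hsum_ge : -(N:ℝ) ≤ ∑ k, (⨅ ζ : Ξ, ((0:ℝ) * (ξ k - (ζ:ℝ)) ^ 2 - φ ζ)) := by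
    calc -(N:ℝ) = ∑ _k : Fin N, (-1:ℝ) := by simp
      _ ≤ _ := Finset.sum_le_sum fun k _ => hinf_ge k
  have hg0 : g 0 ≤ 1 := by
    rw [hg 0]
    have h3 : (1 / (N:ℝ)) * ∑ k, (⨅ ζ : Ξ, ((0:ℝ) * (ξ k - (ζ:ℝ)) ^ 2 - φ ζ)) ≥ -1 := by
      rw [ge_iff_le, div_mul_eq_mul_div, le_div_iff₀ hNpos]
      linarith
    linarith
  have hgl : lamstar * R ^ 2 - 1 ≤ g lamstar := by
    rw [hg lamstar]
    have h3 : (1 / (N:ℝ)) * ∑ k, (⨅ ζ : Ξ, (lamstar * (ξ k - (ζ:ℝ)) ^ 2 - φ ζ)) ≤ 1 := by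
      rw [div_mul_eq_mul_div, div_le_iff₀ hNpos]
      linarith
    linarith
  have hmain : lamstar * R ^ 2 ≤ 2 := by
    have := hmin 0 le_rfl
    linarith
  rw [le_div_iff₀ (by positivity)]
  linarith
end
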